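/- The loop σ : ℝ/ℤ → Ran_{≤2}(S¹) defined by σ(t) = {e^{2πit}, e^{2πi(t+1/2)}} (i.e., the pair of antipodal points rotating once around) is null-homotopic in Ran_{≤3}(S¹): the composite ℝ/ℤ → Ran_{≤2}(S¹) ↪ Ran_{≤3}(S¹) is freely homotopic to a constant loop. -/

import Mathlib

open Set

/-- `Ran_{≤ n}(X)`: nonempty finite subsets of `X` of cardinality at most `n`. -/
def RanLE (n : ℕ) (X : Type u) [TopologicalSpace X] : Type u :=
  {s : Set X // s.Finite ∧ s.Nonempty ∧ s.ncard ≤ n}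

variable {X : Type*} [TopologicalSpace X]

/-- The quotient map `X^n → Ran_{≤ n}(X)`, `(x₁,…,xₙ) ↦ {x₁,…,xₙ}` (restricted to
tuples with nonempty range, which is all of them when `n > 0`). -/
def ranQuot (n : ℕ) (X : Type*) [TopologicalSpace X]
    (f : {f : Fin n → X // (Set.range f).Nonempty}) : RanLE n X :=
  ⟨Set.range f.1, Set.finite_range _, f.2, by
    classical
    calc (Set.range f.1).ncard = (Finset.univ.image f.1 : Finset X).card := by
          rw [← Set.ncard_coe_finset]; congr 1; simp
      _ ≤ (Finset.univ : Finset (Fin n)).card := Finset.card_image_le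
      _ = n := by simp⟩

/-- `Ran_{≤ n}(X)` carries the quotient topology from `X^n`. -/
instance (n : ℕ) : TopologicalSpace (RanLE n X) :=
  TopologicalSpace.coinduced (ranQuot n X) inferInstance

/-- The natural inclusion `Ran_{≤ m}(X) → Ran_{≤ n}(X)` for `m ≤ n`. -/
noncomputable def ranIncl {m n : ℕ} (h : m ≤ n) : RanLE m X → RanLE n X :=
  fun s => ⟨s.1, s.2.1, s.2.2.1, s.2.2.2.trans h⟩

section AuxAntipodal
open Real

/-- The exponential `t ↦ e^{2πit}`, with period `1`. -/
noncomputable def ce (t : ℝ) : Circle := Circle.exp (2 * π * t)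

lemma ce_cont : Continuous ce :=
  Circle.exp.continuous.comp (continuous_const.mul continuous_id)

lemma ce_add_int (t : ℝ) (n : ℤ) : ce (t + n) = ce t := by
  unfold ce
  rw [show 2 * π * (t + n) = 2 * π * t + 2 * π * n by ring, Circle.exp_add,
    Circle.exp_two_pi_mul_int, mul_one]

lemma ce_eq {a b : ℝ} (n : ℤ) (h : a = b + n) : ce a = ce b := by rw [h, ce_add_int]

/-- Triangle wave: the distance from `t` to the nearest integer. -/
noncomputable def N1 (t : ℝ) : ℝ := π⁻¹ * arcsin |sin (π * t)|

/-- Triangle wave: the distance from `2t` to the nearest integer. -/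
noncomputable def N2 (t : ℝ) : ℝ := N1 (2 * t)

lemma N1_cont : Continuous N1 :=
  continuous_const.mul (Real.continuous_arcsin.comp
    (Real.continuous_sin.comp (continuous_const.mul continuous_id)).abs)

lemma N2_cont : Continuous N2 := N1_cont.comp (continuous_const.mul continuous_id)

lemma N1_eq (t : ℝ) : N1 t = |t - round t| := by
  have hπ : (0:ℝ) < π := pi_pos
  set n : ℤ := round t with hn
  set τ : ℝ := t - n with hτdef
  have hτ : |τ| ≤ 1 / 2 := abs_sub_round t
  have habs : τ ≤ |τ| ∧ -|τ| ≤ τ := ⟨le_abs_self τ, neg_abs_le τ⟩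
  have h1 : sin (π * t) = sin (π * τ) * cos ((n : ℝ) * π) := by
    rw [show π * t = π * τ + (n:ℝ) * π by rw [hτdef]; ring, sin_add,
      Real.sin_int_mul_pi, mul_zero, add_zero]
  have hc : |cos ((n : ℝ) * π)| = 1 := by
    have hs : sin ((n : ℝ) * π) = 0 := Real.sin_int_mul_pi _
    have h2 := sin_sq_add_cos_sq ((n : ℝ) * π)
    rw [hs] at h2
    nlinarith [abs_nonneg (cos ((n:ℝ) * π)), sq_abs (cos ((n:ℝ) * π))]
  have h4 : |sin (π * τ)| = sin (π * |τ|) := by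
    rcases le_or_gt 0 τ with h0 | h0
    · rw [abs_of_nonneg h0, abs_of_nonneg]
      exact sin_nonneg_of_nonneg_of_le_pi (by positivity) (by nlinarith [abs_of_nonneg h0])
    · rw [abs_of_neg h0, show π * -τ = -(π * τ) by ring, sin_neg]
      rw [abs_of_nonpos (sin_nonpos_of_nonpos_of_neg_pi_le (by nlinarith) (by nlinarith))]
  have h5 : arcsin (sin (π * |τ|)) = π * |τ| := by
    apply arcsin_sin
    · nlinarith [abs_nonneg τ]
    · nlinarith
  unfold N1
  rw [h1, abs_mul, hc, mul_one, h4, h5, inv_mul_cancel_left₀ (ne_of_gt hπ)]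

lemma N1_cases (t : ℝ) : ∃ n : ℤ, N1 t = t - n ∨ N1 t = n - t := by
  refine ⟨round t, ?_⟩
  rw [N1_eq]
  rcases abs_cases (t - (round t : ℝ)) with ⟨h, _⟩ | ⟨h, _⟩
  · exact Or.inl (by linarith)
  · exact Or.inr (by linarith)

lemma N2_cases (t : ℝ) : ∃ n : ℤ, N2 t = 2 * t - n ∨ N2 t = n - 2 * t := by
  obtain ⟨n, h | h⟩ := N1_cases (2 * t)
  · exact ⟨n, Or.inl h⟩
  · exact ⟨n, Or.inr h⟩

lemma N1_per (t : ℝ) : N1 (t + 1) = N1 t := by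
  unfold N1
  rw [show π * (t + 1) = π * t + π by ring, sin_add_pi, abs_neg]

lemma N2_per (t : ℝ) : N2 (t + 1) = N2 t := by
  unfold N2
  rw [show 2 * (t + 1) = 2 * t + 1 + 1 by ring, N1_per, N1_per]
/-- `mk3 a b c = {a,b,c}` as an element of `RanLE 3 Circle`. -/
noncomputable def mk3 (a b c : Circle) : RanLE 3 Circle :=
  ranQuot 3 Circle ⟨![a, b, c], ⟨a, 0, rfl⟩⟩

lemma mk3_val (a b c : Circle) : (mk3 a b c).1 = {a, b, c} := by
  show Set.range ![a, b, c] = {a, b, c}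
  rw [Matrix.range_cons, Matrix.range_cons, Matrix.range_cons_empty,
    Set.singleton_union, Set.singleton_union]

lemma mk3_congr {a b c a' b' c' : Circle} (h : ({a, b, c} : Set Circle) = {a', b', c'}) :
    mk3 a b c = mk3 a' b' c' := Subtype.ext (by rw [mk3_val, mk3_val, h])

lemma mk3_cont {α : Type*} [TopologicalSpace α] {A B C : α → Circle}
    (hA : Continuous A) (hB : Continuous B) (hC : Continuous C) :
    Continuous fun x => mk3 (A x) (B x) (C x) := by
  have h1 : Continuous (ranQuot 3 Circle) := continuous_coinduced_rng
  refine h1.comp (Continuous.subtype_mk (continuous_pi fun i => ?_) _)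
  fin_cases i
  · simpa using hA
  · simpa using hB
  · simpa using hC

lemma set_swap13 {α : Type*} (a b c : α) : ({a, b, c} : Set α) = {c, b, a} := by
  ext x
  simp only [Set.mem_insert_iff, Set.mem_singleton_iff]
  tauto

lemma set_J2L (t : ℝ) :
    ({ce (t + N2 t), ce (t - 1 - N2 t), ce t} : Set Circle) = {ce (3 * t), ce (-t), ce t} := by
  obtain ⟨n, h | h⟩ := N2_cases t
  · rw [show ce (t + N2 t) = ce (3 * t) from ce_eq (-n) (by push_cast; linarith),
      show ce (t - 1 - N2 t) = ce (-t) from ce_eq (n - 1) (by push_cast; linarith)]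
  · rw [show ce (t + N2 t) = ce (-t) from ce_eq n (by push_cast; linarith),
      show ce (t - 1 - N2 t) = ce (3 * t) from ce_eq (-n - 1) (by push_cast; linarith)]
    exact Set.insert_comm _ _ _

lemma set_J2R (t : ℝ) :
    ({ce (2 * t + N1 t), ce (2 * t - 1 - N1 t), ce (-t)} : Set Circle)
      = {ce (3 * t), ce (-t), ce t} := by
  obtain ⟨n, h | h⟩ := N1_cases t
  · rw [show ce (2 * t + N1 t) = ce (3 * t) from ce_eq (-n) (by push_cast; linarith),
      show ce (2 * t - 1 - N1 t) = ce t from ce_eq (n - 1) (by push_cast; linarith)]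
    ext x
    simp only [Set.mem_insert_iff, Set.mem_singleton_iff]
    tauto
  · rw [show ce (2 * t + N1 t) = ce t from ce_eq n (by push_cast; linarith),
      show ce (2 * t - 1 - N1 t) = ce (3 * t) from ce_eq (-n - 1) (by push_cast; linarith)]
    ext x
    simp only [Set.mem_insert_iff, Set.mem_singleton_iff]
    tauto

lemma set_J4L (t : ℝ) :
    ({ce (-t + N1 t), ce (-t - 1 - N1 t), ce (2 * t)} : Set Circle)
      = {ce 0, ce (-(2 * t)), ce (2 * t)} := by
  obtain ⟨n, h | h⟩ := N1_cases t
  · rw [show ce (-t + N1 t) = ce 0 from ce_eq (-n) (by push_cast; linarith),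
      show ce (-t - 1 - N1 t) = ce (-(2 * t)) from ce_eq (n - 1) (by push_cast; linarith)]
  · rw [show ce (-t + N1 t) = ce (-(2 * t)) from ce_eq n (by push_cast; linarith),
      show ce (-t - 1 - N1 t) = ce 0 from ce_eq (-n - 1) (by push_cast; linarith)]
    exact Set.insert_comm _ _ _

lemma set_J4R (t : ℝ) :
    ({ce (N2 t), ce (-1 - N2 t), ce 0} : Set Circle)
      = {ce 0, ce (-(2 * t)), ce (2 * t)} := by
  obtain ⟨n, h | h⟩ := N2_cases t
  · rw [show ce (N2 t) = ce (2 * t) from ce_eq (-n) (by push_cast; linarith),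
      show ce (-1 - N2 t) = ce (-(2 * t)) from ce_eq (n - 1) (by push_cast; linarith)]
    ext x
    simp only [Set.mem_insert_iff, Set.mem_singleton_iff]
    tauto
  · rw [show ce (N2 t) = ce (-(2 * t)) from ce_eq n (by push_cast; linarith),
      show ce (-1 - N2 t) = ce (2 * t) from ce_eq (-n - 1) (by push_cast; linarith)]
    ext x
    simp only [Set.mem_insert_iff, Set.mem_singleton_iff]
    tauto
/-- clamp to `[0,1]` -/
noncomputable def cl (r : ℝ) : ℝ := max 0 (min 1 r)

lemma cl_cont : Continuous cl := continuous_const.max (continuous_const.min continuous_id)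

lemma cl_nonpos {r : ℝ} (h : r ≤ 0) : cl r = 0 := by
  unfold cl
  rw [max_eq_left (le_trans (min_le_right _ _) h)]

lemma cl_one_le {r : ℝ} (h : 1 ≤ r) : cl r = 1 := by
  unfold cl
  rw [min_eq_left h, max_eq_right zero_le_one]

/-- Phase 1: contract the antipodal pair `{t, t+1/2}` to the single point `{t}`. -/
noncomputable def Ph1 (p : ℝ × ℝ) : RanLE 3 Circle :=
  mk3 (ce p.2) (ce (p.2 + (1 - cl (5 * p.1)) / 2)) (ce p.2)

/-- Phase 2: split `{t}` into strands of winding `-1` and `3`. -/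
noncomputable def Ph2 (p : ℝ × ℝ) : RanLE 3 Circle :=
  mk3 (ce (p.2 - 1 / 2 + (1 / 2 + cl (5 * p.1 - 1) * N2 p.2)))
    (ce (p.2 - 1 / 2 - (1 / 2 + cl (5 * p.1 - 1) * N2 p.2))) (ce p.2)

/-- Phase 3: merge the winding `3` strand with the winding `1` strand into winding `2`. -/
noncomputable def Ph3 (p : ℝ × ℝ) : RanLE 3 Circle :=
  mk3 (ce (2 * p.2 - 1 / 2 + (1 / 2 + cl (3 - 5 * p.1) * N1 p.2)))
    (ce (2 * p.2 - 1 / 2 - (1 / 2 + cl (3 - 5 * p.1) * N1 p.2))) (ce (-p.2))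

/-- Phase 4: split the winding `-1` strand into windings `0` and `-2`. -/
noncomputable def Ph4 (p : ℝ × ℝ) : RanLE 3 Circle :=
  mk3 (ce (-p.2 - 1 / 2 + (1 / 2 + cl (5 * p.1 - 3) * N1 p.2)))
    (ce (-p.2 - 1 / 2 - (1 / 2 + cl (5 * p.1 - 3) * N1 p.2))) (ce (2 * p.2))

/-- Phase 5: cancel the windings `2` and `-2` strands against each other. -/
noncomputable def Ph5 (p : ℝ × ℝ) : RanLE 3 Circle :=
  mk3 (ce (-1 / 2 + (1 / 2 + cl (5 - 5 * p.1) * N2 p.2)))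
    (ce (-1 / 2 - (1 / 2 + cl (5 - 5 * p.1) * N2 p.2))) (ce 0)

noncomputable def G4 (p : ℝ × ℝ) : RanLE 3 Circle := if 5 * p.1 ≤ 4 then Ph4 p else Ph5 p
noncomputable def G3 (p : ℝ × ℝ) : RanLE 3 Circle := if 5 * p.1 ≤ 3 then Ph3 p else G4 p
noncomputable def G2 (p : ℝ × ℝ) : RanLE 3 Circle := if 5 * p.1 ≤ 2 then Ph2 p else G3 p
/-- The full (not yet descended) null-homotopy `ℝ × ℝ → Ran_{≤3}(S¹)`. -/
noncomputable def bigG (p : ℝ × ℝ) : RanLE 3 Circle := if 5 * p.1 ≤ 1 then Ph1 p else G2 p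

-- boundary agreements
lemma bd1 (p : ℝ × ℝ) (h : 5 * p.1 = 1) : Ph1 p = Ph2 p := by
  unfold Ph1 Ph2
  rw [h, cl_one_le le_rfl, cl_nonpos (by norm_num)]
  apply mk3_congr
  rw [show p.2 + (1 - 1) / 2 = p.2 by ring,
    show p.2 - 1 / 2 + (1 / 2 + 0 * N2 p.2) = p.2 by ring,
    show ce (p.2 - 1 / 2 - (1 / 2 + 0 * N2 p.2)) = ce p.2 from ce_eq (-1) (by push_cast; ring)]

lemma bd2 (p : ℝ × ℝ) (h : 5 * p.1 = 2) : Ph2 p = Ph3 p := by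
  unfold Ph2 Ph3
  rw [h, show (2:ℝ) - 1 = 1 by norm_num, show (3:ℝ) - 2 = 1 by norm_num,
    cl_one_le le_rfl]
  simp only [one_mul]
  apply mk3_congr
  rw [show p.2 - 1 / 2 + (1 / 2 + N2 p.2) = p.2 + N2 p.2 by ring,
    show p.2 - 1 / 2 - (1 / 2 + N2 p.2) = p.2 - 1 - N2 p.2 by ring,
    show 2 * p.2 - 1 / 2 + (1 / 2 + N1 p.2) = 2 * p.2 + N1 p.2 by ring,
    show 2 * p.2 - 1 / 2 - (1 / 2 + N1 p.2) = 2 * p.2 - 1 - N1 p.2 by ring]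
  exact (set_J2L p.2).trans (set_J2R p.2).symm

lemma bd3 (p : ℝ × ℝ) (h : 5 * p.1 = 3) : Ph3 p = Ph4 p := by
  unfold Ph3 Ph4
  rw [h, show (3:ℝ) - 3 = 0 by norm_num, cl_nonpos le_rfl]
  simp only [zero_mul]
  apply mk3_congr
  rw [show 2 * p.2 - 1 / 2 + (1 / 2 + 0) = 2 * p.2 by ring,
    show -p.2 - 1 / 2 + (1 / 2 + 0) = -p.2 by ring,
    show ce (2 * p.2 - 1 / 2 - (1 / 2 + 0)) = ce (2 * p.2) from ce_eq (-1) (by push_cast; ring),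
    show ce (-p.2 - 1 / 2 - (1 / 2 + 0)) = ce (-p.2) from ce_eq (-1) (by push_cast; ring)]
  ext x
  simp only [Set.mem_insert_iff, Set.mem_singleton_iff]
  tauto

lemma bd4 (p : ℝ × ℝ) (h : 5 * p.1 = 4) : Ph4 p = Ph5 p := by
  unfold Ph4 Ph5
  rw [h, show (4:ℝ) - 3 = 1 by norm_num, show (5:ℝ) - 4 = 1 by norm_num,
    cl_one_le le_rfl]
  simp only [one_mul]
  apply mk3_congr
  rw [show -p.2 - 1 / 2 + (1 / 2 + N1 p.2) = -p.2 + N1 p.2 by ring,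
    show -p.2 - 1 / 2 - (1 / 2 + N1 p.2) = -p.2 - 1 - N1 p.2 by ring,
    show -1 / 2 + (1 / 2 + N2 p.2) = N2 p.2 by ring,
    show -1 / 2 - (1 / 2 + N2 p.2) = -1 - N2 p.2 by ring]
  exact (set_J4L p.2).trans (set_J4R p.2).symm
-- continuity of the phases
lemma cont_aux1 : Continuous fun p : ℝ × ℝ => p.2 := continuous_snd
lemma contN1' : Continuous fun p : ℝ × ℝ => N1 p.2 := N1_cont.comp continuous_snd
lemma contN2' : Continuous fun p : ℝ × ℝ => N2 p.2 := N2_cont.comp continuous_snd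

lemma Ph1_cont : Continuous Ph1 := by
  apply mk3_cont (ce_cont.comp continuous_snd) _ (ce_cont.comp continuous_snd)
  apply ce_cont.comp
  exact continuous_snd.add ((continuous_const.sub
    (cl_cont.comp (continuous_const.mul continuous_fst))).div_const 2)

lemma Ph2_cont : Continuous Ph2 := by
  have hd : Continuous fun p : ℝ × ℝ => 1 / 2 + cl (5 * p.1 - 1) * N2 p.2 :=
    continuous_const.add
      ((cl_cont.comp ((continuous_const.mul continuous_fst).sub continuous_const)).mul contN2')
  exact mk3_cont (ce_cont.comp ((continuous_snd.sub continuous_const).add hd))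
    (ce_cont.comp ((continuous_snd.sub continuous_const).sub hd))
    (ce_cont.comp continuous_snd)

lemma Ph3_cont : Continuous Ph3 := by
  have hd : Continuous fun p : ℝ × ℝ => 1 / 2 + cl (3 - 5 * p.1) * N1 p.2 :=
    continuous_const.add
      ((cl_cont.comp (continuous_const.sub (continuous_const.mul continuous_fst))).mul contN1')
  exact mk3_cont
    (ce_cont.comp (((continuous_const.mul continuous_snd).sub continuous_const).add hd))
    (ce_cont.comp (((continuous_const.mul continuous_snd).sub continuous_const).sub hd))
    (ce_cont.comp continuous_snd.neg)

lemma Ph4_cont : Continuous Ph4 := by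
  have hd : Continuous fun p : ℝ × ℝ => 1 / 2 + cl (5 * p.1 - 3) * N1 p.2 :=
    continuous_const.add
      ((cl_cont.comp ((continuous_const.mul continuous_fst).sub continuous_const)).mul contN1')
  exact mk3_cont
    (ce_cont.comp ((continuous_snd.neg.sub continuous_const).add hd))
    (ce_cont.comp ((continuous_snd.neg.sub continuous_const).sub hd))
    (ce_cont.comp (continuous_const.mul continuous_snd))

lemma Ph5_cont : Continuous Ph5 := by
  have hd : Continuous fun p : ℝ × ℝ => 1 / 2 + cl (5 - 5 * p.1) * N2 p.2 :=
    continuous_const.add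
      ((cl_cont.comp (continuous_const.sub (continuous_const.mul continuous_fst))).mul contN2')
  exact mk3_cont (ce_cont.comp (continuous_const.add hd))
    (ce_cont.comp (continuous_const.sub hd)) continuous_const

lemma G4_cont : Continuous G4 := by
  unfold G4
  apply Continuous.if_le Ph4_cont Ph5_cont (continuous_const.mul continuous_fst)
    continuous_const
  exact fun p hp => bd4 p hp

lemma G3_cont : Continuous G3 := by
  unfold G3
  apply Continuous.if_le Ph3_cont G4_cont (continuous_const.mul continuous_fst) continuous_const
  intro p hp
  have : G4 p = Ph4 p := if_pos (by rw [show 5 * p.1 = 3 from hp]; norm_num)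
  rw [this]
  exact bd3 p hp

lemma G2_cont : Continuous G2 := by
  unfold G2
  apply Continuous.if_le Ph2_cont G3_cont (continuous_const.mul continuous_fst) continuous_const
  intro p hp
  have h4 : G3 p = Ph3 p := if_pos (by rw [show 5 * p.1 = 2 from hp]; norm_num)
  rw [h4]
  exact bd2 p hp

lemma bigG_cont : Continuous bigG := by
  unfold bigG
  apply Continuous.if_le Ph1_cont G2_cont (continuous_const.mul continuous_fst) continuous_const
  intro p hp
  have h4 : G2 p = Ph2 p := if_pos (by rw [show 5 * p.1 = 1 from hp]; norm_num)
  rw [h4]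
  exact bd1 p hp

-- periodicity in t
lemma Ph1_per (s t : ℝ) : Ph1 (s, t + 1) = Ph1 (s, t) := by
  unfold Ph1
  rw [show ce (t + 1) = ce t from ce_eq 1 (by push_cast; ring),
    show ce (t + 1 + (1 - cl (5 * s)) / 2) = ce (t + (1 - cl (5 * s)) / 2) from
      ce_eq 1 (by push_cast; ring)]

lemma Ph2_per (s t : ℝ) : Ph2 (s, t + 1) = Ph2 (s, t) := by
  unfold Ph2
  simp only [N2_per]
  rw [show ce (t + 1) = ce t from ce_eq 1 (by push_cast; ring),
    show ce (t + 1 - 1 / 2 + (1 / 2 + cl (5 * s - 1) * N2 t))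
      = ce (t - 1 / 2 + (1 / 2 + cl (5 * s - 1) * N2 t)) from ce_eq 1 (by push_cast; ring),
    show ce (t + 1 - 1 / 2 - (1 / 2 + cl (5 * s - 1) * N2 t))
      = ce (t - 1 / 2 - (1 / 2 + cl (5 * s - 1) * N2 t)) from ce_eq 1 (by push_cast; ring)]

lemma Ph3_per (s t : ℝ) : Ph3 (s, t + 1) = Ph3 (s, t) := by
  unfold Ph3
  simp only [N1_per]
  rw [show ce (-(t + 1)) = ce (-t) from ce_eq (-1) (by push_cast; ring),
    show ce (2 * (t + 1) - 1 / 2 + (1 / 2 + cl (3 - 5 * s) * N1 t))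
      = ce (2 * t - 1 / 2 + (1 / 2 + cl (3 - 5 * s) * N1 t)) from ce_eq 2 (by push_cast; ring),
    show ce (2 * (t + 1) - 1 / 2 - (1 / 2 + cl (3 - 5 * s) * N1 t))
      = ce (2 * t - 1 / 2 - (1 / 2 + cl (3 - 5 * s) * N1 t)) from ce_eq 2 (by push_cast; ring)]

lemma Ph4_per (s t : ℝ) : Ph4 (s, t + 1) = Ph4 (s, t) := by
  unfold Ph4
  simp only [N1_per]
  rw [show ce (2 * (t + 1)) = ce (2 * t) from ce_eq 2 (by push_cast; ring),
    show ce (-(t + 1) - 1 / 2 + (1 / 2 + cl (5 * s - 3) * N1 t))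
      = ce (-t - 1 / 2 + (1 / 2 + cl (5 * s - 3) * N1 t)) from ce_eq (-1) (by push_cast; ring),
    show ce (-(t + 1) - 1 / 2 - (1 / 2 + cl (5 * s - 3) * N1 t))
      = ce (-t - 1 / 2 - (1 / 2 + cl (5 * s - 3) * N1 t)) from ce_eq (-1) (by push_cast; ring)]

lemma Ph5_per (s t : ℝ) : Ph5 (s, t + 1) = Ph5 (s, t) := by
  unfold Ph5
  simp only [N2_per]

lemma bigG_per (s t : ℝ) : bigG (s, t + 1) = bigG (s, t) := by
  unfold bigG G2 G3 G4
  split_ifs with h1 h2 h3 h4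
  · exact Ph1_per s t
  · exact Ph2_per s t
  · exact Ph3_per s t
  · exact Ph4_per s t
  · exact Ph5_per s t
lemma bigG_per_int (s t : ℝ) (k : ℤ) : bigG (s, t + k) = bigG (s, t) := by
  have hp : Function.Periodic (fun u => bigG (s, u)) 1 := fun u => bigG_per s u
  simpa [mul_one] using (hp.int_mul k) t

/-- The descended homotopy `ℝ × (ℝ/ℤ) → Ran_{≤3}(S¹)`. -/
noncomputable def bigH (s : ℝ) (x : AddCircle (1 : ℝ)) : RanLE 3 Circle :=
  Quotient.liftOn' x (fun t => bigG (s, t)) (by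
    intro a b hab
    obtain ⟨k, hk⟩ := AddSubgroup.mem_zmultiples_iff.mp (QuotientAddGroup.leftRel_apply.mp hab)
    have hb : b = a + (k : ℝ) := by
      have : (k : ℝ) * 1 = -a + b := by rw [← hk]; simp [zsmul_eq_mul]
      linarith [this]
    show bigG (s, a) = bigG (s, b)
    rw [hb, bigG_per_int])

lemma bigH_mk (s t : ℝ) : bigH s ((t : ℝ) : AddCircle (1 : ℝ)) = bigG (s, t) := rfl

lemma bigH_cont : Continuous fun q : ℝ × AddCircle (1 : ℝ) => bigH q.1 q.2 := by
  have hq : Topology.IsQuotientMap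
      (Prod.map (id : ℝ → ℝ) ((↑) : ℝ → AddCircle (1 : ℝ))) := by
    apply IsOpenMap.isQuotientMap
    · exact IsOpenMap.id.prodMap QuotientAddGroup.isOpenMap_coe
    · exact continuous_id.prodMap (AddCircle.continuous_mk' 1)
    · rintro ⟨s, x⟩
      obtain ⟨t, rfl⟩ := QuotientAddGroup.mk_surjective x
      exact ⟨(s, t), rfl⟩
  rw [hq.continuous_iff]
  have : ((fun q : ℝ × AddCircle (1:ℝ) => bigH q.1 q.2) ∘
      Prod.map (id : ℝ → ℝ) ((↑) : ℝ → AddCircle (1 : ℝ))) = bigG := by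
    funext p
    exact bigH_mk p.1 p.2
  rw [this]
  exact bigG_cont

lemma bigG_zero (t : ℝ) : bigG (0, t) = mk3 (ce t) (ce (t + 1 / 2)) (ce t) := by
  unfold bigG Ph1
  rw [if_pos (by norm_num), mul_zero, cl_nonpos le_rfl]
  norm_num

/-- the constant endpoint -/
noncomputable def cEnd : RanLE 3 Circle := mk3 (ce 0) (ce (-1)) (ce 0)

lemma bigG_one (t : ℝ) : bigG (1, t) = cEnd := by
  unfold bigG G2 G3 G4 Ph5 cEnd
  rw [if_neg (by norm_num), if_neg (by norm_num), if_neg (by norm_num), if_neg (by norm_num)]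
  rw [show (5:ℝ) - 5 * 1 = 0 by norm_num, cl_nonpos le_rfl]
  apply mk3_congr
  rw [show (-1:ℝ) / 2 + (1 / 2 + 0 * N2 t) = 0 by ring,
    show (-1:ℝ) / 2 - (1 / 2 + 0 * N2 t) = -1 by ring]
end AuxAntipodal

open Real in
/-- The loop of antipodal pairs `t ↦ {e^{2πit}, e^{2πi(t+1/2)}}`, a loop
`ℝ/ℤ → Ran_{≤2}(S¹)` (here with values of cardinality at most 2), becomes
null-homotopic in `Ran_{≤3}(S¹)`: as a map to `Ran_{≤3}(S¹)` it is freely homotopic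
to a constant loop. -/
theorem antipodal_pair_loop_nullhomotopic
    (f : C(AddCircle (1 : ℝ), RanLE 3 Circle))
    (hf : ∀ t : ℝ, (f (t : AddCircle (1 : ℝ))).1 =
      {Circle.exp (2 * π * t), Circle.exp (2 * π * (t + 1 / 2))}) :
    ∃ c : RanLE 3 Circle, ContinuousMap.Homotopic f (ContinuousMap.const _ c) := by
  refine ⟨cEnd, ⟨{ toFun := fun q => bigH (q.1 : ℝ) q.2,
                   continuous_toFun := ?_, map_zero_left := ?_, map_one_left := ?_ }⟩⟩
  · exact bigH_cont.comp ((continuous_subtype_val.comp continuous_fst).prodMk continuous_snd)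
  · intro x
    refine QuotientAddGroup.induction_on x (fun t => ?_)
    show bigH ((0 : unitInterval) : ℝ) ((t : ℝ) : AddCircle (1:ℝ)) = _
    rw [show ((0 : unitInterval) : ℝ) = (0 : ℝ) from rfl, bigH_mk, bigG_zero]
    refine Subtype.ext ?_
    rw [mk3_val, hf t]
    show ({ce t, ce (t + 1/2), ce t} : Set Circle) = {ce t, ce (t + 1/2)}
    ext x
    simp only [Set.mem_insert_iff, Set.mem_singleton_iff]
    tauto
  · intro x
    refine QuotientAddGroup.induction_on x (fun t => ?_)
    show bigH ((1 : unitInterval) : ℝ) ((t : ℝ) : AddCircle (1:ℝ)) = _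
    rw [show ((1 : unitInterval) : ℝ) = (1 : ℝ) from rfl, bigH_mk, bigG_one]
    rfl
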